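/- Let λ_R(p) = √(c²R⁻²|p|² + m²c⁴), a₋(R⁻¹p) = √((1 − mc²/λ_R(p))/2). Then for all nonzero p, p−q ∈ ℝ³ and R > 0: |a₋(R⁻¹(p−q))(pᵢ−qᵢ)/|p−q| − a₋(R⁻¹p)pᵢ/|p|| ≤ 3√2 |q|/(2mcR) for each component i = 1,2,3. -/

import Mathlib

noncomputable section
open MeasureTheory Filter Set Matrix
open scoped Real ENNReal RealInnerProductSpace FourierTransform

abbrev R3 : Type := EuclideanSpace ℝ (Fin 3)
abbrev C4 : Type := EuclideanSpace ℂ (Fin 4)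
abbrev C2 : Type := EuclideanSpace ℂ (Fin 2)

/-- `λ(p) = √(c²|p|² + m²c⁴)` -/
def lam (m c : ℝ) (p : R3) : ℝ := Real.sqrt (c ^ 2 * ‖p‖ ^ 2 + m ^ 2 * c ^ 4)

/-- `a₊(p) = √((1 + mc²/λ(p))/2)` -/
def aplus (m c : ℝ) (p : R3) : ℝ := Real.sqrt ((1 + m * c ^ 2 / lam m c p) / 2)

/-- `a₋(p) = √((1 − mc²/λ(p))/2)` -/
def aminus (m c : ℝ) (p : R3) : ℝ := Real.sqrt ((1 - m * c ^ 2 / lam m c p) / 2)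

/-! ### Auxiliary 1-D radial function -/

/-- radial profile of `aminus` -/
def ph (m c r : ℝ) : ℝ :=
  Real.sqrt ((1 - m * c ^ 2 / Real.sqrt (c ^ 2 * r ^ 2 + m ^ 2 * c ^ 4)) / 2)

lemma lamr_ge {m c : ℝ} (hm : 0 < m) (hc : 0 < c) (r : ℝ) :
    m * c ^ 2 ≤ Real.sqrt (c ^ 2 * r ^ 2 + m ^ 2 * c ^ 4) := by
  rw [show m * c ^ 2 = Real.sqrt ((m * c ^ 2) ^ 2) from (Real.sqrt_sq (by positivity)).symm]
  apply Real.sqrt_le_sqrt; nlinarith [sq_nonneg r]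

lemma lamr_sq (m c r : ℝ) :
    (Real.sqrt (c ^ 2 * r ^ 2 + m ^ 2 * c ^ 4)) ^ 2 = c ^ 2 * r ^ 2 + m ^ 2 * c ^ 4 :=
  Real.sq_sqrt (by positivity)

lemma ph_nonneg (m c r : ℝ) : 0 ≤ ph m c r := Real.sqrt_nonneg _

lemma ph_sq {m c : ℝ} (hm : 0 < m) (hc : 0 < c) (r : ℝ) :
    2 * (ph m c r) ^ 2 * Real.sqrt (c ^ 2 * r ^ 2 + m ^ 2 * c ^ 4)
      = Real.sqrt (c ^ 2 * r ^ 2 + m ^ 2 * c ^ 4) - m * c ^ 2 := by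
  have hge := lamr_ge hm hc r
  have hL : 0 < Real.sqrt (c ^ 2 * r ^ 2 + m ^ 2 * c ^ 4) :=
    lt_of_lt_of_le (by positivity) hge
  have h1 : (0:ℝ) ≤ (1 - m * c ^ 2 / Real.sqrt (c ^ 2 * r ^ 2 + m ^ 2 * c ^ 4)) / 2 := by
    have := (div_le_one hL).mpr hge
    linarith
  rw [ph, Real.sq_sqrt h1]
  field_simp

lemma ph_le {m c : ℝ} (hm : 0 < m) (hc : 0 < c) {r : ℝ} (hr : 0 ≤ r) :
    ph m c r ≤ r / (2 * m * c) := by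
  set L := Real.sqrt (c ^ 2 * r ^ 2 + m ^ 2 * c ^ 4) with hLdef
  have hge : m * c ^ 2 ≤ L := lamr_ge hm hc r
  have hsq : L ^ 2 = c ^ 2 * r ^ 2 + m ^ 2 * c ^ 4 := lamr_sq m c r
  have hL : 0 < L := lt_of_lt_of_le (by positivity) hge
  have hfac : (L - m * c ^ 2) * (L + m * c ^ 2) = c ^ 2 * r ^ 2 := by nlinarith [hsq]
  have key : (1 - m * c ^ 2 / L) / 2 ≤ (r / (2 * m * c)) ^ 2 := by
    have h1 : 1 - m * c ^ 2 / L = (L - m * c ^ 2) / L := by field_simp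
    rw [h1, div_div, div_pow, div_le_div_iff₀ (by positivity) (by positivity)]
    nlinarith [hfac, hge, hL, sq_nonneg r,
      mul_nonneg (mul_nonneg (sq_nonneg r) (sub_nonneg.mpr hge))
        (by positivity : (0:ℝ) ≤ L + 2*m*c^2),
      (by positivity : (0:ℝ) < L + m*c^2)]
  calc ph m c r ≤ Real.sqrt ((r / (2 * m * c)) ^ 2) := Real.sqrt_le_sqrt key
    _ = r / (2 * m * c) := Real.sqrt_sq (by positivity)

lemma ph_ge {m c : ℝ} (hm : 0 < m) (hc : 0 < c) {r : ℝ} (hr : 0 ≤ r) :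
    c * r ≤ 2 * ph m c r * Real.sqrt (c ^ 2 * r ^ 2 + m ^ 2 * c ^ 4) := by
  set L := Real.sqrt (c ^ 2 * r ^ 2 + m ^ 2 * c ^ 4) with hLdef
  have hge : m * c ^ 2 ≤ L := lamr_ge hm hc r
  have hsq : L ^ 2 = c ^ 2 * r ^ 2 + m ^ 2 * c ^ 4 := lamr_sq m c r
  have hL : 0 < L := lt_of_lt_of_le (by positivity) hge
  have hphsq := ph_sq hm hc r
  have hsqle : (c * r) ^ 2 ≤ (2 * ph m c r * L) ^ 2 := by
    have hfac : (L - m * c ^ 2) * (L + m * c ^ 2) = c ^ 2 * r ^ 2 := by nlinarith [hsq]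
    have hexp : (2 * ph m c r * L) ^ 2 = 2 * L * (L - m * c ^ 2) := by
      nlinarith [hphsq, hL]
    nlinarith [hfac, hge, sq_nonneg (L - m * c ^ 2)]
  calc c * r = Real.sqrt ((c * r) ^ 2) := (Real.sqrt_sq (by positivity)).symm
    _ ≤ Real.sqrt ((2 * ph m c r * L) ^ 2) := Real.sqrt_le_sqrt hsqle
    _ = 2 * ph m c r * L :=
        Real.sqrt_sq (mul_nonneg (mul_nonneg (by norm_num) (ph_nonneg m c r)) hL.le)

lemma ph_mono {m c : ℝ} (hm : 0 < m) (hc : 0 < c) {r r' : ℝ} (hr : 0 ≤ r) (hrr : r ≤ r') :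
    ph m c r ≤ ph m c r' := by
  apply Real.sqrt_le_sqrt
  have h1 : Real.sqrt (c ^ 2 * r ^ 2 + m ^ 2 * c ^ 4)
      ≤ Real.sqrt (c ^ 2 * r' ^ 2 + m ^ 2 * c ^ 4) := by
    apply Real.sqrt_le_sqrt
    nlinarith [mul_le_mul_of_nonneg_left (pow_le_pow_left₀ hr hrr 2) (sq_nonneg c)]
  have hL : 0 < Real.sqrt (c ^ 2 * r ^ 2 + m ^ 2 * c ^ 4) :=
    lt_of_lt_of_le (by positivity) (lamr_ge hm hc r)
  have := div_le_div_of_nonneg_left (by positivity : (0:ℝ) ≤ m * c ^ 2) hL h1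
  linarith

lemma ph_lip {m c : ℝ} (hm : 0 < m) (hc : 0 < c) {r r' : ℝ} (hr : 0 ≤ r) (hrr : r ≤ r') :
    ph m c r' - ph m c r ≤ (r' - r) / (2 * m * c) := by
  rcases eq_or_lt_of_le (hr.trans hrr) with h0 | hr'
  · have hr0 : r = 0 := le_antisymm (hrr.trans h0.symm.le) hr
    simp only [hr0, ← h0, sub_self, zero_div, le_refl]
  set L := Real.sqrt (c ^ 2 * r ^ 2 + m ^ 2 * c ^ 4) with hLdef
  set M := Real.sqrt (c ^ 2 * r' ^ 2 + m ^ 2 * c ^ 4) with hMdef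
  set a := ph m c r with hadef
  set b := ph m c r' with hbdef
  have hgeL : m * c ^ 2 ≤ L := lamr_ge hm hc r
  have hgeM : m * c ^ 2 ≤ M := lamr_ge hm hc r'
  have hsqL : L ^ 2 = c ^ 2 * r ^ 2 + m ^ 2 * c ^ 4 := lamr_sq m c r
  have hsqM : M ^ 2 = c ^ 2 * r' ^ 2 + m ^ 2 * c ^ 4 := lamr_sq m c r'
  have hL : 0 < L := lt_of_lt_of_le (by positivity) hgeL
  have hM : 0 < M := lt_of_lt_of_le (by positivity) hgeM
  have hLM : L ≤ M := by
    rw [hLdef, hMdef]; apply Real.sqrt_le_sqrt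
    nlinarith [mul_le_mul_of_nonneg_left (pow_le_pow_left₀ hr hrr 2) (sq_nonneg c)]
  have ha0 : 0 ≤ a := ph_nonneg m c r
  have hb0 : 0 ≤ b := ph_nonneg m c r'
  have ha : c * r ≤ 2 * a * L := ph_ge hm hc hr
  have hb : c * r' ≤ 2 * b * M := ph_ge hm hc (hr.trans hrr)
  have hsqa : 2 * a ^ 2 * L = L - m * c ^ 2 := ph_sq hm hc r
  have hsqb : 2 * b ^ 2 * M = M - m * c ^ 2 := ph_sq hm hc r'
  clear_value L M a b
  have hbpos : 0 < b := by nlinarith [mul_pos hc hr']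
  have hD : 0 ≤ r' - r := by linarith
  have hs : 0 < r + r' := by linarith
  have hkey : (b - a) * (a + b) * (2 * L * M) = m * c ^ 2 * (M - L) := by
    linear_combination L * hsqb - M * hsqa
  have h2 : (M - L) * (M + L) = c ^ 2 * (r + r') * (r' - r) := by
    linear_combination hsqM - hsqL
  have s1 : c * (r + r') ≤ 2 * (a + b) * M := by
    linarith [mul_nonneg ha0 (sub_nonneg.mpr hLM), ha, hb]
  have s2 : 2 * L * (M - L) ≤ c ^ 2 * (r + r') * (r' - r) := by
    linarith [h2, sq_nonneg (M - L)]
  have s3 : (2 * m ^ 2 * c ^ 3 * (M - L)) * L ≤ (c * (r + r') * (r' - r) * L) * L := by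
    linarith [mul_le_mul_of_nonneg_left s2 (by positivity : (0:ℝ) ≤ m ^ 2 * c ^ 3),
      mul_le_mul_of_nonneg_right
        (show m ^ 2 * c ^ 4 ≤ L ^ 2 by nlinarith [hgeL])
        (by positivity : (0:ℝ) ≤ c * (r + r') * (r' - r))]
  have s4 : 2 * m ^ 2 * c ^ 3 * (M - L) ≤ c * (r + r') * (r' - r) * L :=
    le_of_mul_le_mul_right s3 hL
  have hP : 0 < 2 * L * M * (a + b) := by positivity
  have hfin : (2 * m * c * (b - a)) * (2 * L * M * (a + b))
      ≤ (r' - r) * (2 * L * M * (a + b)) := by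
    have hlhs : (2 * m * c * (b - a)) * (2 * L * M * (a + b))
        = 2 * m ^ 2 * c ^ 3 * (M - L) := by
      linear_combination 2 * m * c * hkey
    rw [hlhs]
    calc 2 * m ^ 2 * c ^ 3 * (M - L) ≤ c * (r + r') * (r' - r) * L := s4
      _ ≤ (r' - r) * (2 * L * M * (a + b)) := by
          linarith [mul_nonneg (mul_nonneg hD hL.le) (sub_nonneg.mpr s1)]
  have := le_of_mul_le_mul_right hfin hP
  rw [le_div_iff₀ (by positivity : (0:ℝ) < 2 * m * c)]
  linarith

lemma ph_lip_abs {m c : ℝ} (hm : 0 < m) (hc : 0 < c) {r r' : ℝ} (hr : 0 ≤ r) (hr' : 0 ≤ r') :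
    |ph m c r' - ph m c r| ≤ |r' - r| / (2 * m * c) := by
  rcases le_total r r' with h | h
  · rw [abs_of_nonneg (sub_nonneg.mpr (ph_mono hm hc hr h)), abs_of_nonneg (by linarith)]
    exact ph_lip hm hc hr h
  · rw [abs_of_nonpos (sub_nonpos.mpr (ph_mono hm hc hr' h)), abs_of_nonpos (by linarith)]
    have := ph_lip hm hc hr' h
    rw [neg_sub, neg_sub]
    exact this

/-! ### Geometric lemmas -/

lemma comp_le_norm (v : R3) (i : Fin 3) : |v i| ≤ ‖v‖ := by
  rw [EuclideanSpace.norm_eq]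
  calc |v i| = Real.sqrt (‖v i‖ ^ 2) := by
        rw [Real.norm_eq_abs, Real.sqrt_sq (abs_nonneg _)]
    _ ≤ Real.sqrt (∑ j, ‖v j‖ ^ 2) := Real.sqrt_le_sqrt
        (Finset.single_le_sum (fun j _ => sq_nonneg ‖v j‖) (Finset.mem_univ i))

lemma unit_est (x y : R3) (hx : x ≠ 0) (hy : y ≠ 0) :
    ‖‖x‖⁻¹ • x - ‖y‖⁻¹ • y‖ ≤ 2 * ‖x - y‖ / ‖x‖ := by
  have hxn : (0:ℝ) < ‖x‖ := norm_pos_iff.mpr hx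
  have hyn : (0:ℝ) < ‖y‖ := norm_pos_iff.mpr hy
  have hid : ‖x‖⁻¹ • x - ‖y‖⁻¹ • y = ‖x‖⁻¹ • (x - y) + (‖x‖⁻¹ - ‖y‖⁻¹) • y := by
    rw [smul_sub, sub_smul]; abel
  rw [hid]
  have h1 : ‖‖x‖⁻¹ • (x - y)‖ = ‖x - y‖ / ‖x‖ := by
    rw [norm_smul, Real.norm_eq_abs, abs_inv, abs_of_pos hxn]; ring
  have h2 : ‖(‖x‖⁻¹ - ‖y‖⁻¹) • y‖ ≤ ‖x - y‖ / ‖x‖ := by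
    rw [norm_smul, Real.norm_eq_abs]
    have heq : ‖x‖⁻¹ - ‖y‖⁻¹ = (‖y‖ - ‖x‖) / (‖x‖ * ‖y‖) := by
      field_simp
    rw [heq, abs_div, abs_of_pos (mul_pos hxn hyn)]
    have h3 : |‖y‖ - ‖x‖| ≤ ‖x - y‖ := by
      rw [abs_sub_comm]; exact (abs_norm_sub_norm_le x y)
    have h4 : |‖y‖ - ‖x‖| / (‖x‖ * ‖y‖) * ‖y‖ = |‖y‖ - ‖x‖| / ‖x‖ := by
      field_simp
    rw [h4]
    gcongr
  calc ‖‖x‖⁻¹ • (x - y) + (‖x‖⁻¹ - ‖y‖⁻¹) • y‖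
      ≤ ‖‖x‖⁻¹ • (x - y)‖ + ‖(‖x‖⁻¹ - ‖y‖⁻¹) • y‖ := norm_add_le _ _
    _ ≤ ‖x - y‖ / ‖x‖ + ‖x - y‖ / ‖x‖ := by rw [h1]; linarith [h2]
    _ = 2 * ‖x - y‖ / ‖x‖ := by ring

lemma aminus_eq_ph (m c : ℝ) (v : R3) : aminus m c v = ph m c ‖v‖ := rfl

/-- `|a₋(R⁻¹(p−q))(pᵢ−qᵢ)/|p−q| − a₋(R⁻¹p)pᵢ/|p|| ≤ 3√2 |q|/(2mcR)`. -/
theorem aminus_difference_estimate (m c R : ℝ) (hm : 0 < m) (hc : 0 < c) (hR : 0 < R)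
    (p q : R3) (hp : p ≠ 0) (hpq : p - q ≠ 0) (i : Fin 3) :
    |aminus m c (R⁻¹ • (p - q)) * ((p - q) i / ‖p - q‖) -
        aminus m c (R⁻¹ • p) * (p i / ‖p‖)| ≤
      3 * Real.sqrt 2 * ‖q‖ / (2 * m * c * R) := by
  set x := p - q with hxdef
  have hxn : (0:ℝ) < ‖x‖ := norm_pos_iff.mpr hpq
  have hpn : (0:ℝ) < ‖p‖ := norm_pos_iff.mpr hp
  have hnorm_smul : ∀ v : R3, ‖(R⁻¹ : ℝ) • v‖ = R⁻¹ * ‖v‖ := by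
    intro v
    rw [norm_smul, Real.norm_eq_abs, abs_of_pos (inv_pos.mpr hR)]
  set r' := R⁻¹ * ‖x‖ with hr'def
  set r := R⁻¹ * ‖p‖ with hrdef
  have hr'0 : 0 ≤ r' := by positivity
  have hr0 : 0 ≤ r := by positivity
  have hax : aminus m c (R⁻¹ • x) = ph m c r' := by
    rw [aminus_eq_ph, hnorm_smul]
  have hap : aminus m c (R⁻¹ • p) = ph m c r := by
    rw [aminus_eq_ph, hnorm_smul]
  set u' : R3 := ‖x‖⁻¹ • x with hu'def
  set u : R3 := ‖p‖⁻¹ • p with hudef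
  have hu'i : x i / ‖x‖ = u' i := by
    simp [hu'def, PiLp.smul_apply, smul_eq_mul]; ring
  have hui : p i / ‖p‖ = u i := by
    simp [hudef, PiLp.smul_apply, smul_eq_mul]; ring
  rw [hax, hap, hu'i, hui]
  have hxp : ‖x - p‖ = ‖q‖ := by
    rw [hxdef, show p - q - p = -q by abel, norm_neg]
  -- term estimates
  have hsplit : ph m c r' * u' i - ph m c r * u i
      = ph m c r' * (u' i - u i) + (ph m c r' - ph m c r) * u i := by ring
  have hterm1 : |ph m c r' * (u' i - u i)| ≤ ‖q‖ / (m * c * R) := by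
    rw [abs_mul, abs_of_nonneg (ph_nonneg m c r')]
    have h1 : ph m c r' ≤ ‖x‖ / (2 * m * c * R) := by
      have := ph_le hm hc hr'0
      calc ph m c r' ≤ r' / (2 * m * c) := this
        _ = ‖x‖ / (2 * m * c * R) := by rw [hr'def]; ring
    have h2 : |u' i - u i| ≤ 2 * ‖q‖ / ‖x‖ := by
      calc |u' i - u i| = |(u' - u) i| := by simp [PiLp.sub_apply]
        _ ≤ ‖u' - u‖ := comp_le_norm _ i
        _ ≤ 2 * ‖x - p‖ / ‖x‖ := unit_est x p hpq hp
        _ = 2 * ‖q‖ / ‖x‖ := by rw [hxp]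
    calc ph m c r' * |u' i - u i| ≤ (‖x‖ / (2 * m * c * R)) * (2 * ‖q‖ / ‖x‖) := by
          apply mul_le_mul h1 h2 (abs_nonneg _) (by positivity)
      _ = ‖q‖ / (m * c * R) := by field_simp
  have hterm2 : |(ph m c r' - ph m c r) * u i| ≤ ‖q‖ / (2 * m * c * R) := by
    rw [abs_mul]
    have h1 : |ph m c r' - ph m c r| ≤ ‖q‖ / (2 * m * c * R) := by
      have hlip := ph_lip_abs hm hc hr0 hr'0
      have hdist : |r' - r| ≤ ‖q‖ / R := by
        rw [hr'def, hrdef, ← mul_sub, abs_mul, abs_of_pos (inv_pos.mpr hR)]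
        have : |‖x‖ - ‖p‖| ≤ ‖q‖ := hxp ▸ abs_norm_sub_norm_le x p
        rw [div_eq_inv_mul]
        exact mul_le_mul_of_nonneg_left this (by positivity)
      calc |ph m c r' - ph m c r| ≤ |r' - r| / (2 * m * c) := hlip
        _ ≤ (‖q‖ / R) / (2 * m * c) := by gcongr
        _ = ‖q‖ / (2 * m * c * R) := by ring
    have h2 : |u i| ≤ 1 := by
      calc |u i| ≤ ‖u‖ := comp_le_norm u i
        _ = 1 := by
          rw [hudef, norm_smul, Real.norm_eq_abs, abs_inv, abs_of_pos hpn]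
          field_simp
    calc |ph m c r' - ph m c r| * |u i| ≤ (‖q‖ / (2 * m * c * R)) * 1 := by
          apply mul_le_mul h1 h2 (abs_nonneg _) (by positivity)
      _ = ‖q‖ / (2 * m * c * R) := by ring
  have hsqrt2 : (1:ℝ) ≤ Real.sqrt 2 := by
    rw [show (1:ℝ) = Real.sqrt 1 from (Real.sqrt_one).symm]
    exact Real.sqrt_le_sqrt (by norm_num)
  calc |ph m c r' * u' i - ph m c r * u i|
      ≤ |ph m c r' * (u' i - u i)| + |(ph m c r' - ph m c r) * u i| := by
        rw [hsplit]; exact abs_add_le _ _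
    _ ≤ ‖q‖ / (m * c * R) + ‖q‖ / (2 * m * c * R) := add_le_add hterm1 hterm2
    _ = 3 * ‖q‖ / (2 * m * c * R) := by ring
    _ ≤ 3 * Real.sqrt 2 * ‖q‖ / (2 * m * c * R) := by
        apply div_le_div_of_nonneg_right ?_ (by positivity)
        nlinarith [norm_nonneg q]
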